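/- For every nondeterministic finite automaton A over the four-letter alphabet Σ = {A, U, C, G} (with finitely many states), there exist a word w ∈ Σ*, an involutive letter map θ : Σ → Σ (θ ∘ θ = id), a logarithmic factor c ≥ 1, a finite context set C ⊆ Σ* × Σ*, a margin n ∈ ℕ, a finite set T ⊆ Σ* of terminating sequences, and a terminating stem length m ≥ 1, such that the set of all words obtainable from the circular word w^ω by terminating maximally parallel logarithmically-bounded hairpin deletion with respect to these parameters is exactly the language L(A) accepted by A. -/

import Mathlib

/-- The four-letter RNA alphabet `Σ = {A, U, C, G}`. -/
inductive RNABase : Type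
  | A | U | C | G
deriving DecidableEq

/-- The antimorphic extension of a letter map `θ` to words:
`θ̄(v)` is the reverse of the letterwise image of `v` under `θ`. -/
def thetaBar (θ : RNABase → RNABase) (v : List RNABase) : List RNABase :=
  (v.map θ).reverse

/-- `v` is a deletable block (w.r.t. `θ`, logarithmic factor `c`, context set `C`, and
margin `n`): `v = α ++ x ++ ℓ ++ θ̄(α ++ x) ++ z ++ β` for some `(α, β) ∈ C` and words
`x, ℓ, z` with `|α ++ x| ≥ c · log₂ |ℓ|` and `|z| ≤ n`. -/
def DeletableBlock (θ : RNABase → RNABase) (c : ℕ)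
    (C : Set (List RNABase × List RNABase)) (n : ℕ) (v : List RNABase) : Prop :=
  ∃ α β x ℓ z : List RNABase, (α, β) ∈ C ∧
    v = α ++ x ++ ℓ ++ thetaBar θ (α ++ x) ++ z ++ β ∧
    c * Nat.log 2 ℓ.length ≤ (α ++ x).length ∧
    z.length ≤ n

/-- `u` is obtained from `v` by maximally parallel log-hairpin deletion:
`v = u₁ ++ α₁ ++ ⋯ ++ u_M ++ α_M ++ u_{M+1}` and `u = u₁ ++ ⋯ ++ u_{M+1}`, where each
`α_i` is a deletable block, no left context of `C` occurs as a factor of any `u_i`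
(`1 ≤ i ≤ M`), and `u_{M+1}` contains no deletable block as a factor. -/
def MaxParObtained (θ : RNABase → RNABase) (c : ℕ)
    (C : Set (List RNABase × List RNABase)) (n : ℕ) (v u : List RNABase) : Prop :=
  ∃ (ps : List (List RNABase × List RNABase)) (ulast : List RNABase),
    v = (ps.map fun p => p.1 ++ p.2).flatten ++ ulast ∧
    u = (ps.map Prod.fst).flatten ++ ulast ∧
    (∀ p ∈ ps, DeletableBlock θ c C n p.2) ∧
    (∀ p ∈ ps, ∀ ab ∈ C, ¬ ab.1 <:+: p.1) ∧
    (∀ b : List RNABase, DeletableBlock θ c C n b → ¬ b <:+: ulast)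

/-- `r` is obtainable from the circular word `w^ω` by terminating maximally parallel
log-hairpin deletion: for some `K`, `t ∈ T`, `w' ++ t` is a prefix of `w^K`, some `u`
is obtained from `w'` by maximally parallel log-hairpin deletion, and
`u = r ++ x ++ θ̄(x)` with `|x| = m` (terminating stem of length `2 m`). -/
def TermObtainable (w : List RNABase) (θ : RNABase → RNABase) (c : ℕ)
    (C : Set (List RNABase × List RNABase)) (n : ℕ)
    (T : Set (List RNABase)) (m : ℕ) (r : List RNABase) : Prop :=
  ∃ (K : ℕ) (t w' : List RNABase), t ∈ T ∧
    (w' ++ t) <+: (List.replicate K w).flatten ∧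
    ∃ u x : List RNABase, MaxParObtained θ c C n w' u ∧
      x.length = m ∧ u = r ++ x ++ thetaBar θ x

namespace HP
open List

instance : Fintype RNABase := ⟨⟨{.A, .U, .C, .G}, by decide⟩, fun x => by cases x <;> decide⟩

def av : RNABase → ℕ | .A => 0 | .U => 1 | .C => 2 | .G => 3
lemma av_lt (a : RNABase) : av a < 4 := by cases a <;> simp [av]
lemma av_inj {a b : RNABase} (h : av a = av b) : a = b := by
  cases a <;> cases b <;> simp [av] at h ⊢

def letters : List RNABase := [.A, .U, .C, .G]
lemma mem_letters (a : RNABase) : a ∈ letters := by cases a <;> simp [letters]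

def Mk (k : ℕ) : List RNABase := .A :: (List.replicate k .C ++ [.A])

lemma Mk_length (k : ℕ) : (Mk k).length = k + 2 := by simp [Mk]
lemma Mk_inj {j k : ℕ} (h : Mk j = Mk k) : j = k := by
  have := congrArg List.length h; simp [Mk] at this; omega
lemma Mk_ne_nil (k : ℕ) : Mk k ≠ [] := by simp [Mk]
lemma Mk_reverse (k : ℕ) : (Mk k).reverse = Mk k := by simp [Mk]
lemma C_mem_Mk {k : ℕ} (hk : 1 ≤ k) : RNABase.C ∈ Mk k := by
  simp [Mk, List.mem_replicate]; omega

inductive Tok : Type | mk (k : ℕ) | dat (a : RNABase) | grun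
deriving DecidableEq

def enc : Tok → List RNABase
  | .mk k => Mk k
  | .dat a => [a]
  | .grun => [.G, .G]

lemma enc_ne_nil (t : Tok) : enc t ≠ [] := by cases t <;> simp [enc, Mk]
lemma enc_len_pos (t : Tok) : 0 < (enc t).length := List.length_pos_iff.mpr (enc_ne_nil t)

def flatE (ts : List Tok) : List RNABase := (ts.map enc).flatten

@[simp] lemma flatE_nil : flatE [] = [] := rfl
@[simp] lemma flatE_cons (t : Tok) (ts : List Tok) : flatE (t :: ts) = enc t ++ flatE ts := rfl
@[simp] lemma flatE_append (l₁ l₂ : List Tok) : flatE (l₁ ++ l₂) = flatE l₁ ++ flatE l₂ := by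
  simp [flatE]

lemma flatE_eq_nil {ts : List Tok} (h : flatE ts = []) : ts = [] := by
  cases ts with
  | nil => rfl
  | cons t ts => exact absurd (List.append_eq_nil_iff.mp h).1 (enc_ne_nil t)

lemma rep_run : ∀ {j k : ℕ} {u v : List RNABase},
    List.replicate j .C ++ .A :: u = List.replicate k .C ++ .A :: v → j = k ∧ u = v := by
  intro j
  induction j with
  | zero =>
    intro k u v h
    cases k with
    | zero => simpa using h
    | succ k => rw [List.replicate_succ] at h; simp at h
  | succ j ih =>
    intro k u v h
    cases k with
    | zero => rw [List.replicate_succ] at h; simp at h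
    | succ k =>
      rw [List.replicate_succ, List.replicate_succ] at h
      simp only [List.cons_append, List.cons.injEq] at h
      obtain ⟨rfl, h2⟩ := ih h.2
      exact ⟨rfl, h2⟩

lemma run_split : ∀ {j : ℕ} {u v' : List RNABase},
    u ++ .A :: v' = List.replicate j .C ++ [.A] → u = List.replicate j .C ∧ v' = [] := by
  intro j
  induction j with
  | zero =>
    intro u v' h
    cases u with
    | nil => simpa using h
    | cons x u' =>
      simp only [List.replicate_zero, List.nil_append, List.cons_append, List.cons.injEq] at h
      exact absurd h.2 (by simp)
  | succ j ih =>
    intro u v' h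
    rw [List.replicate_succ] at h
    cases u with
    | nil => simp at h
    | cons x u' =>
      simp only [List.cons_append, List.cons.injEq] at h
      obtain ⟨rfl, h2⟩ := h
      obtain ⟨h3, h4⟩ := ih h2
      exact ⟨by rw [h3, List.replicate_succ], h4⟩

def isDat : Tok → Bool | .dat _ => true | _ => false

def WFt (ts : List Tok) : Prop :=
  List.Chain' (fun t t' => isDat t = false ∨ isDat t' = false) ts

lemma head_C {ts : List Tok} {l : List RNABase} (h : flatE ts = .C :: l) :
    ∃ ts', ts = Tok.dat .C :: ts' ∧ flatE ts' = l := by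
  cases ts with
  | nil => simp at h
  | cons t ts' =>
    cases t with
    | mk j => simp [enc, Mk] at h
    | dat b =>
      simp only [flatE_cons, enc, List.cons_append, List.nil_append, List.cons.injEq] at h
      exact ⟨ts', by rw [h.1], h.2⟩
    | grun => simp [enc] at h

lemma marker_occ : ∀ {ts : List Tok} {s₁ : List RNABase}, WFt ts → ∀ {k : ℕ}, 2 ≤ k →
    ∀ {s₂ : List RNABase}, flatE ts = s₁ ++ Mk k ++ s₂ →
    ∃ ts₁ ts₂, ts = ts₁ ++ Tok.mk k :: ts₂ ∧ s₁ = flatE ts₁ ∧ s₂ = flatE ts₂ := by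
  intro ts
  induction ts with
  | nil =>
    intro s₁ _ k hk s₂ h
    exfalso
    have := congrArg List.length h
    simp [Mk] at this
  | cons t rest ih =>
    intro s₁ hwf k hk s₂ h
    rw [flatE_cons] at h
    by_cases hle : (enc t).length ≤ s₁.length
    · have hL1 : enc t <+: enc t ++ flatE rest := ⟨flatE rest, rfl⟩
      have hL2 : s₁ <+: enc t ++ flatE rest := ⟨Mk k ++ s₂, by rw [h, List.append_assoc]⟩
      have hpre : enc t <+: s₁ := List.prefix_of_prefix_length_le hL1 hL2 hle
      obtain ⟨s₁', rfl⟩ := hpre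
      rw [List.append_assoc, List.append_assoc] at h
      have h' : flatE rest = s₁' ++ (Mk k ++ s₂) := List.append_cancel_left h
      rw [← List.append_assoc] at h'
      obtain ⟨ts₁, ts₂, rfl, h1, h2⟩ := ih hwf.tail hk h'
      exact ⟨t :: ts₁, ts₂, rfl, by simp [h1], h2⟩
    · push_neg at hle
      have hL1 : s₁ <+: enc t ++ flatE rest := ⟨Mk k ++ s₂, by rw [h, List.append_assoc]⟩
      have hL2 : enc t <+: enc t ++ flatE rest := ⟨flatE rest, rfl⟩
      have hpre : s₁ <+: enc t := List.prefix_of_prefix_length_le hL1 hL2 (le_of_lt hle)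
      obtain ⟨r, hr⟩ := hpre
      have hrne : r ≠ [] := by
        intro e
        rw [e, List.append_nil] at hr
        rw [hr] at hle
        omega
      have hmain : r ++ flatE rest = Mk k ++ s₂ := by
        rw [← hr, List.append_assoc] at h
        rw [List.append_assoc] at h
        exact List.append_cancel_left h
      obtain ⟨r0, r', rfl⟩ := List.exists_cons_of_ne_nil hrne
      have hr0 : r0 = .A ∧ r' ++ flatE rest = List.replicate k .C ++ [.A] ++ s₂ := by
        rw [Mk] at hmain
        simp only [List.cons_append, List.cons.injEq] at hmain
        refine ⟨hmain.1, ?_⟩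
        simp only [List.append_assoc] at hmain ⊢
        exact hmain.2
      obtain ⟨k', rfl⟩ : ∃ k', k = k' + 2 := ⟨k - 2, by omega⟩
      cases t with
      | grun =>
        exfalso
        have hmem : r0 ∈ enc Tok.grun := by
          rw [← hr]; exact List.mem_append_right _ (List.mem_cons_self)
        rw [hr0.1] at hmem
        simp [enc] at hmem
      | dat a =>
        have hlen1 : (enc (Tok.dat a)).length = 1 := rfl
        have hs : s₁ = [] := List.eq_nil_of_length_eq_zero (by omega)
        subst hs
        simp only [List.nil_append, enc, List.cons.injEq] at hr
        obtain ⟨rfl, rfl⟩ := hr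
        -- now r' = [], hr0.2 : flatE rest = replicate (k'+2) C ++ [A] ++ s₂
        have h2 : flatE rest = .C :: (.C :: (List.replicate k' .C ++ [.A] ++ s₂)) := by
          have := hr0.2
          rw [List.nil_append] at this
          rw [this]
          simp [List.replicate_succ]
        obtain ⟨rest₁, hrest₁, _⟩ := head_C h2
        exfalso
        rw [hrest₁] at hwf
        have h5 := (List.isChain_cons_cons.mp hwf).1
        simp [isDat] at h5
      | mk j =>
        rw [enc] at hr
        cases s₁ with
        | nil =>
          simp only [List.nil_append] at hr
          rw [Mk] at hr
          simp only [List.cons.injEq] at hr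
          obtain ⟨rfl, hr'⟩ := hr
          have heq : List.replicate j .C ++ .A :: flatE rest
              = List.replicate (k' + 2) .C ++ .A :: s₂ := by
            have h6 := hr0.2
            rw [hr'] at h6
            simpa using h6
          obtain ⟨rfl, h4⟩ := rep_run heq
          exact ⟨[], rest, rfl, rfl, h4.symm⟩
        | cons x s₁'' =>
          rw [Mk] at hr
          simp only [List.cons_append, List.cons.injEq] at hr
          obtain ⟨rfl, hr2⟩ := hr
          rw [hr0.1] at hr2
          obtain ⟨_, rfl⟩ := run_split hr2
          have h2 : flatE rest = .C :: (.C :: (List.replicate k' .C ++ [.A] ++ s₂)) := by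
            have := hr0.2
            simp only [List.nil_append] at this
            rw [this]
            simp [List.replicate_succ]
          obtain ⟨rest₁, hrest₁, h3⟩ := head_C h2
          have h4 : flatE rest₁ = .C :: (List.replicate k' .C ++ [.A] ++ s₂) := h3
          obtain ⟨rest₂, hrest₂, _⟩ := head_C h4
          exfalso
          rw [hrest₁, hrest₂] at hwf
          have h5 := (List.isChain_cons_cons.mp hwf.tail).1
          simp [isDat] at h5

lemma skip_tokens {key : Tok} :
    ∀ (pre : List Tok) {δ tsB rest : List Tok}, (∀ t ∈ pre, t ≠ key) →
    δ ++ key :: tsB = pre ++ rest → ∃ δ', δ = pre ++ δ' ∧ δ' ++ key :: tsB = rest := by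
  intro pre
  induction pre with
  | nil => intro δ tsB rest _ h; exact ⟨δ, rfl, h⟩
  | cons t pre' ih =>
    intro δ tsB rest hne h
    cases δ with
    | nil =>
      exfalso
      simp only [List.nil_append, List.cons_append, List.cons.injEq] at h
      exact hne t (by simp) h.1.symm
    | cons d δ₀ =>
      simp only [List.cons_append, List.cons.injEq] at h
      obtain ⟨rfl, h2⟩ := h
      obtain ⟨δ', rfl, h3⟩ := ih (fun s hs => hne s (by simp [hs])) h2
      exact ⟨δ', rfl, h3⟩

lemma prefix_align {W ts₀ tsA : List Tok} (h₁ : ts₀ <+: W) (h₂ : tsA <+: W)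
    (hlen : (flatE ts₀).length ≤ (flatE tsA).length) : ∃ δ, tsA = ts₀ ++ δ := by
  rcases List.prefix_or_prefix_of_prefix h₁ h₂ with h | h
  · obtain ⟨δ, hδ⟩ := h
    exact ⟨δ, hδ.symm⟩
  · obtain ⟨δ₂, hδ₂⟩ := h
    have h3 : flatE tsA ++ flatE δ₂ = flatE ts₀ := by rw [← flatE_append, hδ₂]
    have h4 : (flatE δ₂).length = 0 := by
      have := congrArg List.length h3
      simp at this
      omega
    have h5 : δ₂ = [] := flatE_eq_nil (List.eq_nil_of_length_eq_zero h4)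
    rw [h5, List.append_nil] at hδ₂
    exact ⟨[], by rw [hδ₂, List.append_nil]⟩

def SA (key : Tok) (shape : List Tok) (ts : List Tok) : Prop :=
  ∀ l₁ l₂, ts = l₁ ++ key :: l₂ → ∃ l₂', l₂ = shape ++ l₂'

def SB (key : Tok) (shape : List Tok) (ts : List Tok) : Prop :=
  ∀ l₁ l₂, ts = l₁ ++ key :: l₂ → ∃ l₁', l₁ = l₁' ++ shape

lemma SA_of_not_mem {key : Tok} {shape ts : List Tok} (h : key ∉ ts) : SA key shape ts := by
  intro l₁ l₂ he
  exact absurd (he ▸ List.mem_append_right l₁ (List.mem_cons_self)) h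

lemma SB_of_not_mem {key : Tok} {shape ts : List Tok} (h : key ∉ ts) : SB key shape ts := by
  intro l₁ l₂ he
  exact absurd (he ▸ List.mem_append_right l₁ (List.mem_cons_self)) h

lemma SA_flatten {key : Tok} {shape : List Tok} :
    ∀ {us : List (List Tok)}, (∀ u ∈ us, SA key shape u) → SA key shape us.flatten := by
  intro us
  induction us with
  | nil =>
    intro _ l₁ l₂ h
    exfalso
    have := congrArg List.length h
    simp at this
  | cons u us ih =>
    intro hall l₁ l₂ h
    rw [List.flatten_cons] at h
    by_cases hle : u.length ≤ l₁.length
    · have h1 : u <+: u ++ us.flatten := ⟨_, rfl⟩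
      have h2 : l₁ <+: u ++ us.flatten := ⟨key :: l₂, h.symm⟩
      obtain ⟨l₁', rfl⟩ := List.prefix_of_prefix_length_le h1 h2 hle
      rw [List.append_assoc] at h
      have h3 := List.append_cancel_left h
      exact ih (fun v hv => hall v (by simp [hv])) l₁' l₂ h3
    · push_neg at hle
      have h1 : l₁ <+: u ++ us.flatten := ⟨key :: l₂, h.symm⟩
      have h2 : u <+: u ++ us.flatten := ⟨_, rfl⟩
      obtain ⟨d, hd⟩ := List.prefix_of_prefix_length_le h1 h2 (le_of_lt hle)
      have h3 : d ++ us.flatten = key :: l₂ := by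
        rw [← hd, List.append_assoc] at h
        exact List.append_cancel_left h
      cases d with
      | nil =>
        rw [List.nil_append] at h3
        exact ih (fun v hv => hall v (by simp [hv])) [] l₂ (by simpa using h3)
      | cons d0 d' =>
        simp only [List.cons_append, List.cons.injEq] at h3
        obtain ⟨rfl, h4⟩ := h3
        obtain ⟨l₂', hl₂'⟩ := hall u (by simp) l₁ d' hd.symm
        exact ⟨l₂' ++ us.flatten, by rw [← h4, hl₂', List.append_assoc]⟩

lemma SB_flatten {key : Tok} {shape : List Tok} :
    ∀ {us : List (List Tok)}, (∀ u ∈ us, SB key shape u) → SB key shape us.flatten := by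
  intro us
  induction us with
  | nil =>
    intro _ l₁ l₂ h
    exfalso
    have := congrArg List.length h
    simp at this
  | cons u us ih =>
    intro hall l₁ l₂ h
    rw [List.flatten_cons] at h
    by_cases hle : u.length ≤ l₁.length
    · have h1 : u <+: u ++ us.flatten := ⟨_, rfl⟩
      have h2 : l₁ <+: u ++ us.flatten := ⟨key :: l₂, h.symm⟩
      obtain ⟨l₁', rfl⟩ := List.prefix_of_prefix_length_le h1 h2 hle
      rw [List.append_assoc] at h
      have h3 := List.append_cancel_left h
      obtain ⟨l₁'', hl⟩ := ih (fun v hv => hall v (by simp [hv])) l₁' l₂ h3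
      exact ⟨u ++ l₁'', by rw [hl, List.append_assoc]⟩
    · push_neg at hle
      have h1 : l₁ <+: u ++ us.flatten := ⟨key :: l₂, h.symm⟩
      have h2 : u <+: u ++ us.flatten := ⟨_, rfl⟩
      obtain ⟨d, hd⟩ := List.prefix_of_prefix_length_le h1 h2 (le_of_lt hle)
      have h3 : d ++ us.flatten = key :: l₂ := by
        rw [← hd, List.append_assoc] at h
        exact List.append_cancel_left h
      cases d with
      | nil =>
        rw [List.nil_append] at h3
        obtain ⟨l₁'', hl⟩ := ih (fun v hv => hall v (by simp [hv])) [] l₂ (by simpa using h3)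
        exact ⟨l₁ ++ l₁'', by rw [List.append_assoc, ← hl, List.append_nil]⟩
      | cons d0 d' =>
        simp only [List.cons_append, List.cons.injEq] at h3
        obtain ⟨rfl, h4⟩ := h3
        exact hall u (by simp) l₁ d' hd.symm

def GoodT (ts : List Tok) : Prop := WFt ts ∧ ∀ t ∈ ts.getLast?, isDat t = false

lemma GoodT_nil : GoodT [] := ⟨List.isChain_nil, by simp⟩

lemma GoodT.append {l₁ l₂ : List Tok} (h₁ : GoodT l₁) (h₂ : GoodT l₂) : GoodT (l₁ ++ l₂) := by
  refine ⟨h₁.1.append h₂.1 (fun x hx y _ => Or.inl (h₁.2 x hx)), ?_⟩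
  intro t ht
  rcases eq_or_ne l₂ [] with rfl | hne
  · rw [List.append_nil] at ht
    exact h₁.2 t ht
  · rw [List.getLast?_append_of_ne_nil _ hne] at ht
    exact h₂.2 t ht

lemma GoodT_flatten : ∀ {us : List (List Tok)}, (∀ u ∈ us, GoodT u) → GoodT us.flatten := by
  intro us
  induction us with
  | nil => exact fun _ => GoodT_nil
  | cons u us ih =>
    intro hall
    rw [List.flatten_cons]
    exact (hall u (by simp)).append (ih fun v hv => hall v (by simp [hv]))

lemma infix_of_tok_mem {ts : List Tok} {t : Tok} (h : t ∈ ts) : enc t <:+: flatE ts := by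
  obtain ⟨s, u, rfl⟩ := List.append_of_mem h
  exact ⟨flatE s, flatE u, by simp⟩

@[simp] lemma isDat_mk (k : ℕ) : isDat (.mk k) = false := rfl
@[simp] lemma isDat_dat (a : RNABase) : isDat (.dat a) = true := rfl
@[simp] lemma isDat_grun : isDat .grun = false := rfl

noncomputable section Constr

variable {τ : Type} [Fintype τ]

def idx (q : τ) : ℕ := (Fintype.equivFin τ q : ℕ)

lemma idx_inj {q q' : τ} (h : idx q = idx q') : q = q' :=
  (Fintype.equivFin τ).injective (Fin.ext h)

def kal (q : τ) (a : RNABase) : ℕ := 10 * (4 * idx q + av a) + 10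
def kbe (q : τ) (a : RNABase) : ℕ := 10 * (4 * idx q + av a) + 15

def kDead : ℕ := 2
def kp : ℕ := 3
def kf : ℕ := 4
def kg : ℕ := 5
def kEnd : ℕ := 6
def kT : ℕ := 7

lemma kal_inj {q q' : τ} {a a' : RNABase} (h : kal q a = kal q' a') : q = q' ∧ a = a' := by
  have h2 := av_lt a; have h3 := av_lt a'
  have h1 : idx q = idx q' ∧ av a = av a' := by simp only [kal] at h; omega
  exact ⟨idx_inj h1.1, av_inj h1.2⟩

lemma kbe_inj {q q' : τ} {a a' : RNABase} (h : kbe q a = kbe q' a') : q = q' ∧ a = a' := by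
  have h2 := av_lt a; have h3 := av_lt a'
  have h1 : idx q = idx q' ∧ av a = av a' := by simp only [kbe] at h; omega
  exact ⟨idx_inj h1.1, av_inj h1.2⟩

lemma kal_ge (q : τ) (a : RNABase) : 10 ≤ kal q a := by simp [kal]
lemma kbe_ge (q : τ) (a : RNABase) : 15 ≤ kbe q a := by simp [kbe]
lemma kal_mod (q : τ) (a : RNABase) : kal q a % 10 = 0 := by simp only [kal]; omega
lemma kbe_mod (q : τ) (a : RNABase) : kbe q a % 10 = 5 := by simp only [kbe]; omega
lemma kal_ne_kbe (q q' : τ) (a a' : RNABase) : kal q a ≠ kbe q' a' := by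
  intro h
  have := kal_mod q a; have := kbe_mod q' a'
  omega

def U0 : List Tok := [.mk kp, .mk kp]
def Uslot (q : τ) (a : RNABase) : List Tok :=
  [.mk (kbe q a), .dat a, .mk (kal q a), .mk (kal q a), .mk kf, .mk kf, .mk kg]
def UT : List Tok := [.mk kT, .grun, .mk kEnd, .mk kf, .mk kf, .mk kg]

variable (τ)

def qlist : List τ := Finset.univ.toList
def wMid : List (List Tok) := (qlist τ).flatMap fun q => letters.map (Uslot q)
def wUnits : List (List Tok) := U0 :: (wMid τ ++ [UT])
def wTok : List Tok := (wUnits τ).flatten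
def wrd : List RNABase := flatE (wTok τ)
def UnitsK (K : ℕ) : List (List Tok) := (List.replicate K (wUnits τ)).flatten
def WTok (K : ℕ) : List Tok := (UnitsK τ K).flatten

lemma WTok_succ (K : ℕ) : WTok τ (K + 1) = wTok τ ++ WTok τ K := by
  simp [WTok, UnitsK, List.replicate_succ, wTok]

lemma flat_rep (K : ℕ) : (List.replicate K (wrd τ)).flatten = flatE (WTok τ K) := by
  induction K with
  | zero => simp [WTok, UnitsK]
  | succ K ih => rw [List.replicate_succ, List.flatten_cons, ih, WTok_succ, flatE_append, wrd]

lemma mem_units {u : List Tok} {K : ℕ} (h : u ∈ UnitsK τ K) :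
    u = U0 ∨ (∃ (q : τ) (a : RNABase), u = Uslot q a) ∨ u = UT := by
  rw [UnitsK, List.mem_flatten] at h
  obtain ⟨l, hl, hu⟩ := h
  rw [List.eq_of_mem_replicate hl] at hu
  rw [wUnits, List.mem_cons, List.mem_append] at hu
  rcases hu with h | h | h
  · exact Or.inl h
  · rw [wMid, List.mem_flatMap] at h
    obtain ⟨q, _, hm⟩ := h
    rw [List.mem_map] at hm
    obtain ⟨a, _, ha⟩ := hm
    exact Or.inr (Or.inl ⟨q, a, ha.symm⟩)
  · exact Or.inr (Or.inr (by simpa using h))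

lemma goodT_WTok (K : ℕ) : GoodT (WTok τ K) := by
  apply GoodT_flatten
  intro u hu
  rcases mem_units τ hu with rfl | ⟨q, a, rfl⟩ | rfl
  · exact ⟨by simp [U0, WFt, List.Chain', List.isChain_cons_cons], by simp [U0]⟩
  · exact ⟨by simp [Uslot, WFt, List.Chain', List.isChain_cons_cons], by simp [Uslot]⟩
  · exact ⟨by simp [UT, WFt, List.Chain', List.isChain_cons_cons], by simp [UT]⟩

lemma WFt_WTok (K : ℕ) : WFt (WTok τ K) := (goodT_WTok τ K).1

variable {τ}

lemma SA_head {key : Tok} {rest : List Tok} (h : key ∉ rest) : SA key rest (key :: rest) := by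
  intro l₁ l₂ he
  cases l₁ with
  | nil =>
    simp only [List.nil_append, List.cons.injEq] at he
    exact ⟨[], by rw [← he.2, List.append_nil]⟩
  | cons t l₁' =>
    exfalso
    simp only [List.cons_append, List.cons.injEq] at he
    exact h (by rw [he.2]; exact List.mem_append_right _ (List.mem_cons_self))

lemma kDead_notin {K : ℕ} : (Tok.mk kDead) ∉ WTok τ K := by
  intro h
  rw [WTok, List.mem_flatten] at h
  obtain ⟨u, hu, hm⟩ := h
  rcases mem_units τ hu with rfl | ⟨q, a, rfl⟩ | rfl
  · simp [U0, kDead, kp] at hm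
  · have h1 := kal_ge q a; have h2 := kbe_ge q a
    simp only [Uslot, List.mem_cons, List.not_mem_nil, or_false, Tok.mk.injEq] at hm
    rcases hm with h | h | h | h | h | h | h <;>
      (try exact Tok.noConfusion h) <;>
      (simp only [kDead, kp, kf, kg, kT, kEnd] at h; omega)
  · simp only [UT, List.mem_cons, List.not_mem_nil, or_false, Tok.mk.injEq] at hm
    rcases hm with h | h | h | h | h | h <;>
      (try exact Tok.noConfusion h) <;>
      (simp only [kDead, kp, kf, kg, kT, kEnd] at h; omega)

lemma SA_kbe (q : τ) (a : RNABase) (K : ℕ) :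
    SA (.mk (kbe q a))
      [.dat a, .mk (kal q a), .mk (kal q a), .mk kf, .mk kf, .mk kg] (WTok τ K) := by
  apply SA_flatten
  intro u hu
  rcases mem_units τ hu with rfl | ⟨q', a', rfl⟩ | rfl
  · apply SA_of_not_mem
    intro hm
    simp only [U0, List.mem_cons, List.not_mem_nil, or_false, Tok.mk.injEq] at hm
    rcases hm with h | h <;> (simp only [kbe, kp] at h; omega)
  · by_cases hqa : kbe q' a' = kbe q a
    · obtain ⟨rfl, rfl⟩ := kbe_inj hqa
      rw [Uslot]
      apply SA_head
      simp only [List.mem_cons, List.not_mem_nil, or_false, Tok.mk.injEq]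
      push_neg
      refine ⟨by simp, ?_, ?_, ?_, ?_, ?_⟩ <;>
        (intro h; simp only [kal, kbe, kf, kg] at h; omega)
    · apply SA_of_not_mem
      simp only [Uslot, List.mem_cons, List.not_mem_nil, or_false, Tok.mk.injEq]
      push_neg
      refine ⟨fun h => hqa h.symm, by simp, ?_, ?_, ?_, ?_, ?_⟩ <;>
        (intro h; simp only [kal, kbe, kf, kg] at h; omega)
  · apply SA_of_not_mem
    simp only [UT, List.mem_cons, List.not_mem_nil, or_false, Tok.mk.injEq]
    push_neg
    refine ⟨?_, by simp, ?_, ?_, ?_, ?_⟩ <;>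
      (intro h; simp only [kbe, kT, kEnd, kf, kg] at h; omega)

lemma SA_kT (K : ℕ) :
    SA (.mk kT) [.grun, .mk kEnd, .mk kf, .mk kf, .mk kg] (WTok (τ := τ) K) := by
  apply SA_flatten
  intro u hu
  rcases mem_units τ hu with rfl | ⟨q', a', rfl⟩ | rfl
  · apply SA_of_not_mem
    intro hm
    simp only [U0, List.mem_cons, List.not_mem_nil, or_false, Tok.mk.injEq] at hm
    rcases hm with h | h <;> (simp only [kT, kp] at h; omega)
  · apply SA_of_not_mem
    simp only [Uslot, List.mem_cons, List.not_mem_nil, or_false, Tok.mk.injEq]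
    push_neg
    refine ⟨?_, by simp, ?_, ?_, ?_, ?_, ?_⟩ <;>
      (intro h; simp only [kal, kbe, kT, kf, kg] at h; omega)
  · rw [UT]
    apply SA_head
    simp only [List.mem_cons, List.not_mem_nil, or_false, Tok.mk.injEq]
    push_neg
    refine ⟨by simp, ?_, ?_, ?_, ?_⟩ <;>
      (intro h; simp only [kT, kEnd, kf, kg] at h; omega)

lemma SB_kEnd (K : ℕ) : SB (.mk kEnd) [.mk kT, .grun] (WTok (τ := τ) K) := by
  apply SB_flatten
  intro u hu
  rcases mem_units τ hu with rfl | ⟨q', a', rfl⟩ | rfl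
  · apply SB_of_not_mem
    intro hm
    simp only [U0, List.mem_cons, List.not_mem_nil, or_false, Tok.mk.injEq] at hm
    rcases hm with h | h <;> (simp only [kEnd, kp] at h; omega)
  · apply SB_of_not_mem
    simp only [Uslot, List.mem_cons, List.not_mem_nil, or_false, Tok.mk.injEq]
    push_neg
    refine ⟨?_, by simp, ?_, ?_, ?_, ?_, ?_⟩ <;>
      (intro h; simp only [kal, kbe, kEnd, kf, kg] at h; omega)
  · intro l₁ l₂ he
    rw [UT] at he
    cases l₁ with
    | nil =>
      simp only [List.nil_append, List.cons.injEq, Tok.mk.injEq, kT, kEnd] at he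
      omega
    | cons t1 l₁ =>
      simp only [List.cons_append, List.cons.injEq] at he
      obtain ⟨rfl, he⟩ := he
      cases l₁ with
      | nil =>
        exfalso
        simp only [List.nil_append, List.cons.injEq] at he
        exact Tok.noConfusion he.1
      | cons t2 l₁ =>
        simp only [List.cons_append, List.cons.injEq] at he
        obtain ⟨rfl, he⟩ := he
        cases l₁ with
        | nil => exact ⟨[], rfl⟩
        | cons t3 l₁ =>
          exfalso
          simp only [List.cons_append, List.cons.injEq] at he
          obtain ⟨rfl, he⟩ := he
          have hm : Tok.mk kEnd ∈ [Tok.mk kf, Tok.mk kf, Tok.mk kg] := by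
            rw [he]; exact List.mem_append_right _ (List.mem_cons_self)
          simp only [List.mem_cons, List.not_mem_nil, or_false, Tok.mk.injEq] at hm
          rcases hm with h | h | h <;> (simp only [kEnd, kf, kg] at h; omega)


lemma qlist_mem (q : τ) : q ∈ qlist τ := by simp [qlist]

lemma split_slot (q : τ) (a : RNABase) :
    ∃ pre suf : List Tok, wTok τ = .mk kp :: .mk kp :: pre ++ .mk (kbe q a) ::
      (.dat a :: .mk (kal q a) :: .mk (kal q a) :: .mk kf :: .mk kf :: .mk kg :: suf) := by
  have hq : Uslot q a ∈ wMid τ := by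
    rw [wMid, List.mem_flatMap]
    exact ⟨q, qlist_mem q, List.mem_map.mpr ⟨a, mem_letters a, rfl⟩⟩
  obtain ⟨m1, m2, hm⟩ := List.append_of_mem hq
  refine ⟨m1.flatten, m2.flatten ++ UT, ?_⟩
  rw [wTok, wUnits, hm]
  simp [U0, Uslot, UT, List.flatten_append, List.append_assoc]

lemma split_T :
    wTok τ = .mk kp :: .mk kp :: (wMid τ).flatten ++ .mk kT :: .grun :: .mk kEnd ::
      .mk kf :: .mk kf :: .mk kg :: ([] : List Tok) := by
  rw [wTok, wUnits]
  simp [U0, UT, List.flatten_append, List.append_assoc]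

lemma wTok_head [Nonempty τ] : ∃ (q1 : τ) (ts : List Tok), wTok τ =
    .mk kp :: .mk kp :: .mk (kbe q1 .A) :: .dat .A :: .mk (kal q1 .A) :: .mk (kal q1 .A) ::
      .mk kf :: .mk kf :: .mk kg :: ts := by
  obtain ⟨q1, qr, hq⟩ : ∃ (q1 : τ) (qr : List τ), qlist τ = q1 :: qr := by
    rcases hq : qlist τ with _ | ⟨q1, qr⟩
    · exact absurd (qlist_mem (Classical.arbitrary τ)) (by rw [hq]; simp)
    · exact ⟨q1, qr, rfl⟩
  refine ⟨q1, (Uslot q1 .U ++ Uslot q1 .C ++ Uslot q1 .G ++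
      ((qr.flatMap fun q => letters.map (Uslot q)).flatten ++ UT)), ?_⟩
  rw [wTok, wUnits, wMid, hq]
  simp [U0, Uslot, UT, letters, List.flatten_append, List.append_assoc]

lemma flatE_suffix_le {x y : List Tok} (h : wTok τ = x ++ y) :
    (flatE y).length ≤ (wrd τ).length := by
  rw [wrd, h, flatE_append, List.length_append]
  omega

lemma flatE_prefix_le {x y : List Tok} (h : wTok τ = x ++ y) :
    (flatE x).length ≤ (wrd τ).length := by
  rw [wrd, h, flatE_append, List.length_append]
  omega

variable (B : NFA RNABase τ)

def Ctx : Set (List RNABase × List RNABase) :=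
  {pr | ∃ q a q' a', q' ∈ B.step q a ∧ pr = (Mk (kal q a), Mk (kbe q' a'))} ∪
  {pr | ∃ q a q', q' ∈ B.step q a ∧ q' ∈ B.accept ∧ pr = (Mk (kal q a), Mk kT)} ∪
  {pr | ∃ q a, q ∈ B.start ∧ pr = (Mk kp, Mk (kbe q a))} ∪
  {pr | (∃ q, q ∈ B.start ∧ q ∈ B.accept) ∧ pr = (Mk kp, Mk kT)} ∪
  {(Mk kf, Mk kg), (Mk kp, Mk kDead), (Mk kEnd, Mk kDead)}

lemma Ctx_finite : (Ctx B).Finite := by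
  have h1 : {pr | ∃ q a q' a', q' ∈ B.step q a ∧
      pr = (Mk (kal q a), Mk (kbe q' a'))}.Finite := by
    apply Set.Finite.subset (Set.finite_range
      (fun t : τ × RNABase × τ × RNABase => (Mk (kal t.1 t.2.1), Mk (kbe t.2.2.1 t.2.2.2))))
    rintro pr ⟨q, a, q', a', _, rfl⟩
    exact ⟨(q, a, q', a'), rfl⟩
  have h2 : {pr | ∃ q a q', q' ∈ B.step q a ∧ q' ∈ B.accept ∧
      pr = (Mk (kal q a), Mk kT)}.Finite := by
    apply Set.Finite.subset (Set.finite_range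
      (fun t : τ × RNABase => (Mk (kal t.1 t.2), Mk kT)))
    rintro pr ⟨q, a, q', _, _, rfl⟩
    exact ⟨(q, a), rfl⟩
  have h3 : {pr | ∃ q a, q ∈ B.start ∧ pr = (Mk kp, Mk (kbe q a))}.Finite := by
    apply Set.Finite.subset (Set.finite_range
      (fun t : τ × RNABase => (Mk kp, Mk (kbe t.1 t.2))))
    rintro pr ⟨q, a, _, rfl⟩
    exact ⟨(q, a), rfl⟩
  have h4 : {pr : List RNABase × List RNABase |
      (∃ q, q ∈ B.start ∧ q ∈ B.accept) ∧ pr = (Mk kp, Mk kT)}.Finite := by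
    apply Set.Finite.subset (Set.finite_singleton (Mk kp, Mk kT))
    rintro pr ⟨_, rfl⟩
    rfl
  have h5 : ({(Mk kf, Mk kg), (Mk kp, Mk kDead), (Mk kEnd, Mk kDead)} :
      Set (List RNABase × List RNABase)).Finite := by
    apply Set.Finite.insert
    apply Set.Finite.insert
    exact Set.finite_singleton _
  exact ((((h1.union h2).union h3).union h4).union h5).subset (by rw [Ctx])

lemma Ctx_kf : (Mk kf, Mk kg) ∈ Ctx B := by rw [Ctx]; right; left; rfl
lemma Ctx_kp_dead : (Mk kp, Mk kDead) ∈ Ctx B := by rw [Ctx]; right; right; left; rfl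
lemma Ctx_kEnd_dead : (Mk kEnd, Mk kDead) ∈ Ctx B := by rw [Ctx]; right; right; right; rfl

lemma Ctx_trans {q : τ} {a : RNABase} {q' : τ} (h : q' ∈ B.step q a) (a' : RNABase) :
    (Mk (kal q a), Mk (kbe q' a')) ∈ Ctx B := by
  rw [Ctx]; left; left; left; left; exact ⟨q, a, q', a', h, rfl⟩

lemma Ctx_fin {q : τ} {a : RNABase} {q' : τ} (h : q' ∈ B.step q a) (h2 : q' ∈ B.accept) :
    (Mk (kal q a), Mk kT) ∈ Ctx B := by
  rw [Ctx]; left; left; left; right; exact ⟨q, a, q', h, h2, rfl⟩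

lemma Ctx_start {q : τ} (h : q ∈ B.start) (a : RNABase) :
    (Mk kp, Mk (kbe q a)) ∈ Ctx B := by
  rw [Ctx]; left; left; right; exact ⟨q, a, h, rfl⟩

lemma Ctx_startfin {q : τ} (h : q ∈ B.start) (h2 : q ∈ B.accept) :
    (Mk kp, Mk kT) ∈ Ctx B := by
  rw [Ctx]; left; right; exact ⟨⟨q, h, h2⟩, rfl⟩

lemma Ctx_shape {α β : List RNABase} (h : (α, β) ∈ Ctx B) :
    ∃ j k, 2 ≤ j ∧ 2 ≤ k ∧ α = Mk j ∧ β = Mk k := by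
  rw [Ctx] at h
  rcases h with ((((h | h) | h) | h) | h)
  · obtain ⟨q, a, q', a', _, heq⟩ := h
    have h1 := kal_ge q a; have h2 := kbe_ge q' a'
    exact ⟨kal q a, kbe q' a', by omega, by omega,
      congrArg Prod.fst heq, congrArg Prod.snd heq⟩
  · obtain ⟨q, a, q', _, _, heq⟩ := h
    have h1 := kal_ge q a
    exact ⟨kal q a, kT, by omega, by simp [kT],
      congrArg Prod.fst heq, congrArg Prod.snd heq⟩
  · obtain ⟨q, a, _, heq⟩ := h
    have h2 := kbe_ge q a
    exact ⟨kp, kbe q a, by simp [kp], by omega,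
      congrArg Prod.fst heq, congrArg Prod.snd heq⟩
  · obtain ⟨_, heq⟩ := h
    exact ⟨kp, kT, by simp [kp], by simp [kT],
      congrArg Prod.fst heq, congrArg Prod.snd heq⟩
  · rcases h with h | h | h
    · exact ⟨kf, kg, by simp [kf], by simp [kg],
        congrArg Prod.fst h, congrArg Prod.snd h⟩
    · exact ⟨kp, kDead, by simp [kp], by simp [kDead],
        congrArg Prod.fst h, congrArg Prod.snd h⟩
    · exact ⟨kEnd, kDead, by simp [kEnd], by simp [kDead],
        congrArg Prod.fst h, congrArg Prod.snd h⟩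

lemma Ctx_inv_kal {q : τ} {a : RNABase} {β : List RNABase}
    (h : (Mk (kal q a), β) ∈ Ctx B) :
    (∃ q' a', q' ∈ B.step q a ∧ β = Mk (kbe q' a')) ∨
    (∃ q', q' ∈ B.step q a ∧ q' ∈ B.accept ∧ β = Mk kT) := by
  rw [Ctx] at h
  rcases h with ((((h | h) | h) | h) | h)
  · obtain ⟨q1, a1, q1', a1', hs, heq⟩ := h
    have h1 : kal q a = kal q1 a1 := Mk_inj (congrArg Prod.fst heq)
    obtain ⟨rfl, rfl⟩ := kal_inj h1
    exact Or.inl ⟨q1', a1', hs, congrArg Prod.snd heq⟩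
  · obtain ⟨q1, a1, q1', hs, hacc, heq⟩ := h
    have h1 : kal q a = kal q1 a1 := Mk_inj (congrArg Prod.fst heq)
    obtain ⟨rfl, rfl⟩ := kal_inj h1
    exact Or.inr ⟨q1', hs, hacc, congrArg Prod.snd heq⟩
  · obtain ⟨q1, a1, _, heq⟩ := h
    have h1 : kal q a = kp := Mk_inj (congrArg Prod.fst heq)
    have := kal_ge q a
    exact absurd h1 (by simp only [kp]; omega)
  · obtain ⟨_, heq⟩ := h
    have h1 : kal q a = kp := Mk_inj (congrArg Prod.fst heq)
    have := kal_ge q a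
    exact absurd h1 (by simp only [kp]; omega)
  · have hga := kal_ge q a
    rcases h with h | h | h <;>
      · have h1 := Mk_inj (congrArg Prod.fst h)
        exact absurd h1 (by simp only [kf, kp, kEnd]; omega)

lemma Ctx_inv_kp {β : List RNABase} (h : (Mk kp, β) ∈ Ctx B) :
    (∃ q a, q ∈ B.start ∧ β = Mk (kbe q a)) ∨
    ((∃ q, q ∈ B.start ∧ q ∈ B.accept) ∧ β = Mk kT) ∨ β = Mk kDead := by
  rw [Ctx] at h
  rcases h with ((((h | h) | h) | h) | h)
  · obtain ⟨q1, a1, q1', a1', _, heq⟩ := h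
    have h1 : kp = kal q1 a1 := Mk_inj (congrArg Prod.fst heq)
    have := kal_ge q1 a1
    exact absurd h1 (by simp only [kp]; omega)
  · obtain ⟨q1, a1, q1', _, _, heq⟩ := h
    have h1 : kp = kal q1 a1 := Mk_inj (congrArg Prod.fst heq)
    have := kal_ge q1 a1
    exact absurd h1 (by simp only [kp]; omega)
  · obtain ⟨q1, a1, hst, heq⟩ := h
    exact Or.inl ⟨q1, a1, hst, congrArg Prod.snd heq⟩
  · obtain ⟨hex, heq⟩ := h
    exact Or.inr (Or.inl ⟨hex, congrArg Prod.snd heq⟩)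
  · rcases h with h | h | h
    · have h1 := Mk_inj (congrArg Prod.fst h)
      exact absurd h1 (by simp only [kf, kp]; omega)
    · exact Or.inr (Or.inr (congrArg Prod.snd h))
    · have h1 := Mk_inj (congrArg Prod.fst h)
      exact absurd h1 (by simp only [kEnd, kp]; omega)

lemma Ctx_inv_kEnd {β : List RNABase} (h : (Mk kEnd, β) ∈ Ctx B) : β = Mk kDead := by
  rw [Ctx] at h
  rcases h with ((((h | h) | h) | h) | h)
  · obtain ⟨q1, a1, q1', a1', _, heq⟩ := h
    have h1 : kEnd = kal q1 a1 := Mk_inj (congrArg Prod.fst heq)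
    have := kal_ge q1 a1
    exact absurd h1 (by simp only [kEnd]; omega)
  · obtain ⟨q1, a1, q1', _, _, heq⟩ := h
    have h1 : kEnd = kal q1 a1 := Mk_inj (congrArg Prod.fst heq)
    have := kal_ge q1 a1
    exact absurd h1 (by simp only [kEnd]; omega)
  · obtain ⟨q1, a1, _, heq⟩ := h
    have h1 : kEnd = kp := Mk_inj (congrArg Prod.fst heq)
    exact absurd h1 (by simp only [kEnd, kp]; omega)
  · obtain ⟨_, heq⟩ := h
    have h1 : kEnd = kp := Mk_inj (congrArg Prod.fst heq)
    exact absurd h1 (by simp only [kEnd, kp]; omega)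
  · rcases h with h | h | h
    · have h1 := Mk_inj (congrArg Prod.fst h)
      exact absurd h1 (by simp only [kf, kEnd]; omega)
    · have h1 := Mk_inj (congrArg Prod.fst h)
      exact absurd h1 (by simp only [kEnd, kp]; omega)
    · exact congrArg Prod.snd h

lemma Ctx_kal_lc (Htot : ∀ (q : τ) (a : RNABase), (B.step q a).Nonempty)
    (q : τ) (a : RNABase) : ∃ β, (Mk (kal q a), β) ∈ Ctx B := by
  obtain ⟨q', hq'⟩ := Htot q a
  exact ⟨Mk (kbe q' .A), Ctx_trans B hq' .A⟩

lemma thetaBar_id (l : List RNABase) : thetaBar id l = l.reverse := by simp [thetaBar]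

lemma del_block {k1 k2 : ℕ} {z : List RNABase} {n : ℕ}
    (hC : (Mk k1, Mk k2) ∈ Ctx B) (hz : z.length ≤ n) :
    DeletableBlock id 1 (Ctx B) n (Mk k1 ++ Mk k1 ++ z ++ Mk k2) := by
  refine ⟨Mk k1, Mk k2, [], [], z, hC, ?_, by simp, hz⟩
  rw [thetaBar_id]
  simp [Mk_reverse, List.append_assoc]

lemma del_filler (n : ℕ) : DeletableBlock id 1 (Ctx B) n (Mk kf ++ Mk kf ++ Mk kg) := by
  have := del_block B (Ctx_kf B) (z := []) (n := n) (by simp)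
  simpa using this

lemma del_decomp {n : ℕ} {b : List RNABase} (h : DeletableBlock id 1 (Ctx B) n b) :
    ∃ j k MID, 2 ≤ j ∧ 2 ≤ k ∧ b = Mk j ++ MID ++ Mk k ∧ (Mk j, Mk k) ∈ Ctx B := by
  obtain ⟨α, β, x, ℓ, z, hC, hshape, _, _⟩ := h
  obtain ⟨j, k, hj, hk, rfl, rfl⟩ := Ctx_shape B hC
  exact ⟨j, k, x ++ ℓ ++ thetaBar id (Mk j ++ x) ++ z, hj, hk,
    by rw [hshape]; simp [List.append_assoc], hC⟩

lemma no_lc_short {l : List RNABase} (hl : l.length ≤ 2) :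
    ∀ ab ∈ Ctx B, ¬ ab.1 <:+: l := by
  rintro ⟨α, β⟩ hab hinf
  obtain ⟨j, k, hj, _, rfl, _⟩ := Ctx_shape B hab
  have := hinf.length_le
  rw [Mk_length] at this
  omega

lemma no_del_GG (n : ℕ) :
    ∀ b, DeletableBlock id 1 (Ctx B) n b → ¬ b <:+: [RNABase.G, RNABase.G] := by
  intro b hdel hinf
  obtain ⟨j, k, MID, hj, _, rfl, _⟩ := del_decomp B hdel
  have hC : RNABase.C ∈ Mk j ++ MID ++ Mk k :=
    List.mem_append_left _ (List.mem_append_left _ (C_mem_Mk (by omega)))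
  have := hinf.subset hC
  simp at this

end Constr


section NFAaux
variable {γ : Type}

def Run (M : NFA RNABase γ) : γ → List RNABase → γ → Prop
  | q, [], qf => q = qf
  | q, a :: y, qf => ∃ q', q' ∈ M.step q a ∧ Run M q' y qf

lemma mem_evalFrom {M : NFA RNABase γ} :
    ∀ {y : List RNABase} {S : Set γ} {q : γ},
      q ∈ M.evalFrom S y ↔ ∃ q₀ ∈ S, Run M q₀ y q := by
  intro y
  induction y with
  | nil => intro S q; simp [NFA.evalFrom, Run]
  | cons a y ih =>
    intro S q
    have hh : M.evalFrom S (a :: y) = M.evalFrom (M.stepSet S a) y := rfl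
    rw [hh, ih]
    constructor
    · rintro ⟨q₁, hq₁, hr⟩
      rw [NFA.mem_stepSet] at hq₁
      obtain ⟨q₀, hq₀, hstep⟩ := hq₁
      exact ⟨q₀, hq₀, q₁, hstep, hr⟩
    · rintro ⟨q₀, hq₀, q₁, hstep, hr⟩
      exact ⟨q₁, (NFA.mem_stepSet ..).mpr ⟨q₀, hq₀, hstep⟩, hr⟩

lemma accepts_iff {M : NFA RNABase γ} {y : List RNABase} :
    y ∈ M.accepts ↔ ∃ q₀ ∈ M.start, ∃ qf ∈ M.accept, Run M q₀ y qf := by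
  rw [NFA.mem_accepts]
  constructor
  · rintro ⟨qf, hacc, hev⟩
    obtain ⟨q₀, hq₀, hr⟩ := mem_evalFrom.mp hev
    exact ⟨q₀, hq₀, qf, hacc, hr⟩
  · rintro ⟨q₀, hq₀, qf, hacc, hr⟩
    exact ⟨qf, hacc, mem_evalFrom.mpr ⟨q₀, hq₀, hr⟩⟩

end NFAaux

section Compl
variable {σ : Type}

def Bc (A : NFA RNABase σ) : NFA RNABase (Option σ) where
  step := fun s a => match s with
    | none => {none}
    | some q => insert none (Option.some '' A.step q a)
  start := Option.some '' A.start
  accept := Option.some '' A.accept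

lemma Bc_tot (A : NFA RNABase σ) (s : Option σ) (a : RNABase) :
    ((Bc A).step s a).Nonempty := by
  cases s
  · exact ⟨none, rfl⟩
  · exact ⟨none, Set.mem_insert _ _⟩

lemma Run_none {A : NFA RNABase σ} :
    ∀ {y : List RNABase} {s : Option σ}, Run (Bc A) none y s → s = none := by
  intro y
  induction y with
  | nil => intro s h; exact h.symm
  | cons a y ih =>
    rintro s ⟨q', hq', hr⟩
    have hq : q' = none := hq'
    subst hq
    exact ih hr

lemma Run_Bc {A : NFA RNABase σ} :
    ∀ {y : List RNABase} {q qf : σ}, Run (Bc A) (some q) y (some qf) ↔ Run A q y qf := by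
  intro y
  induction y with
  | nil =>
    intro q qf
    constructor
    · exact fun h => Option.some.inj h
    · exact fun h => congrArg some h
  | cons a y ih =>
    intro q qf
    constructor
    · rintro ⟨s', hs', hr⟩
      rcases Set.mem_insert_iff.mp hs' with rfl | hmem
      · exact absurd (Run_none hr) (by simp)
      · obtain ⟨q'', hq'', rfl⟩ := hmem
        exact ⟨q'', hq'', ih.mp hr⟩
    · rintro ⟨q'', hq'', hr⟩
      exact ⟨some q'', Set.mem_insert_iff.mpr (Or.inr ⟨q'', hq'', rfl⟩), ih.mpr hr⟩

lemma Bc_accepts (A : NFA RNABase σ) (y : List RNABase) :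
    (∃ q₀ ∈ (Bc A).start, ∃ qf ∈ (Bc A).accept, Run (Bc A) q₀ y qf) ↔ y ∈ A.accepts := by
  rw [accepts_iff]
  constructor
  · rintro ⟨q₀, hq₀, qf, hacc, hr⟩
    obtain ⟨p₀, hp₀, rfl⟩ := hq₀
    obtain ⟨pf, hpf, rfl⟩ := hacc
    exact ⟨p₀, hp₀, pf, hpf, Run_Bc.mp hr⟩
  · rintro ⟨q₀, hq₀, qf, hacc, hr⟩
    exact ⟨some q₀, ⟨q₀, hq₀, rfl⟩, some qf, ⟨qf, hacc, rfl⟩, Run_Bc.mpr hr⟩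

end Compl


noncomputable section UPsec
open List
variable {τ : Type} [Fintype τ] (B : NFA RNABase τ)

def HEADk (y : List RNABase) (q : τ) : ℕ :=
  match y with
  | [] => kT
  | a :: _ => kbe q a

def TBlockTok (zb : ℕ) (bt : List Tok) : Prop :=
  ∃ k₀ k₁ zT, bt = .mk k₀ :: .mk k₀ :: (zT ++ [.mk k₁]) ∧ (Mk k₀, Mk k₁) ∈ Ctx B ∧
    (flatE zT).length ≤ zb

lemma len_ffg : (flatE [Tok.mk kf, Tok.mk kf, Tok.mk kg]).length = 19 := by
  simp [enc, Mk, kf, kg]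

lemma UP : ∀ (y : List RNABase) (q qf : τ), Run B q y qf → qf ∈ B.accept →
    ∃ (pre suf : List Tok) (J : ℕ) (ps : List (List Tok × List Tok)) (rest : List Tok),
      wTok τ = .mk kp :: .mk kp :: pre ++ .mk (HEADk y q) :: suf ∧
      suf ++ (List.replicate J (wTok τ)).flatten
        = (ps.map fun p => p.1 ++ p.2).flatten ++ .grun :: .mk kEnd :: rest ∧
      (ps.map Prod.fst).flatten = y.map Tok.dat ∧
      (∀ p ∈ ps, ∃ a, p.1 = [Tok.dat a]) ∧
      (∀ p ∈ ps, TBlockTok B (2 * (wrd τ).length + 19) p.2) := by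
  intro y
  induction y with
  | nil =>
    intro q qf hrun hacc
    have hq : q = qf := hrun
    refine ⟨(wMid τ).flatten, .grun :: .mk kEnd :: [.mk kf, .mk kf, .mk kg], 0, [],
      [.mk kf, .mk kf, .mk kg], ?_, by simp, by simp, by simp, by simp⟩
    have := split_T (τ := τ)
    simpa [HEADk] using this
  | cons a y' ih =>
    intro q qf hrun hacc
    obtain ⟨q', hstep, hrun'⟩ := hrun
    obtain ⟨pre', suf', J', ps', rest', hsplit', heq', hkept', hp1', hblk'⟩ :=
      ih q' qf hrun' hacc
    obtain ⟨preS, sufS, hsplitS⟩ := split_slot q a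
    set bt : List Tok := .mk (kal q a) :: .mk (kal q a) ::
      ((([.mk kf, .mk kf, .mk kg] ++ sufS) ++ (.mk kp :: .mk kp :: pre')) ++
        [.mk (HEADk y' q')]) with hbt
    refine ⟨preS, .dat a :: .mk (kal q a) :: .mk (kal q a) :: .mk kf :: .mk kf :: .mk kg :: sufS,
      J' + 1, (⟨[.dat a], bt⟩) :: ps', rest', ?_, ?_, ?_, ?_, ?_⟩
    · simpa [HEADk] using hsplitS
    · rw [List.replicate_succ, List.flatten_cons]
      conv_lhs => rw [show wTok τ ++ (List.replicate J' (wTok τ)).flatten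
        = .mk kp :: .mk kp :: pre' ++ .mk (HEADk y' q') ::
            (suf' ++ (List.replicate J' (wTok τ)).flatten) by
          rw [hsplit']; simp [List.append_assoc]]
      rw [heq', hbt]
      simp [List.append_assoc]
    · simp [hkept']
    · intro p hp
      rcases List.mem_cons.mp hp with rfl | hp
      · exact ⟨a, rfl⟩
      · exact hp1' p hp
    · intro p hp
      rcases List.mem_cons.mp hp with rfl | hp
      · refine ⟨kal q a, HEADk y' q', _, hbt, ?_, ?_⟩
        · cases y' with
          | nil =>
            have hq : q' = qf := hrun'
            subst hq
            exact Ctx_fin B hstep hacc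
          | cons a' y'' => exact Ctx_trans B hstep a'
        · have h1 : (flatE sufS).length ≤ (wrd τ).length := by
            apply flatE_suffix_le (x := .mk kp :: .mk kp :: preS ++
              [.mk (kbe q a), .dat a, .mk (kal q a), .mk (kal q a), .mk kf, .mk kf, .mk kg])
            rw [hsplitS]; simp [List.append_assoc]
          have h2 : (flatE (.mk kp :: .mk kp :: pre')).length ≤ (wrd τ).length := by
            apply flatE_prefix_le (y := .mk (HEADk y' q') :: suf')
            rw [hsplit']
          have h3 := len_ffg
          simp only [flatE_append, List.length_append] at *
          omega
      · exact hblk' p hp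

end UPsec


noncomputable section Assemble1
open List
variable {τ : Type} [Fintype τ] (B : NFA RNABase τ)

lemma flat_rep' (K : ℕ) :
    (List.replicate K (wrd τ)).flatten = flatE ((List.replicate K (wTok τ)).flatten) := by
  induction K with
  | zero => simp
  | succ K ih =>
    rw [List.replicate_succ, List.replicate_succ, List.flatten_cons, List.flatten_cons,
      flatE_append, ih, wrd]

lemma flatE_blocks (ps : List (List Tok × List Tok)) :
    (((ps.map fun p => (flatE p.1, flatE p.2)).map fun p => p.1 ++ p.2)).flatten
      = flatE ((ps.map fun p => p.1 ++ p.2).flatten) := by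
  induction ps with
  | nil => simp
  | cons p ps ih => simp only [List.map_cons, List.flatten_cons, flatE_append, ih]

lemma flatE_fsts (ps : List (List Tok × List Tok)) :
    ((ps.map fun p => (flatE p.1, flatE p.2)).map Prod.fst).flatten
      = flatE ((ps.map Prod.fst).flatten) := by
  induction ps with
  | nil => simp
  | cons p ps ih => simp only [List.map_cons, List.flatten_cons, flatE_append, ih]

lemma flatE_datmap (y : List RNABase) : flatE (y.map Tok.dat) = y := by
  induction y with
  | nil => simp
  | cons a y ih => simp [enc, ih]

lemma del_of_TBlockTok {zb n : ℕ} {bt : List Tok} (h : TBlockTok B zb bt) (hzn : zb ≤ n) :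
    DeletableBlock id 1 (Ctx B) n (flatE bt) := by
  obtain ⟨k₀, k₁, zT, rfl, hC, hlen⟩ := h
  have hdb := del_block B hC (z := flatE zT) (n := n) (by omega)
  have heq : flatE (Tok.mk k₀ :: Tok.mk k₀ :: (zT ++ [Tok.mk k₁]))
      = Mk k₀ ++ Mk k₀ ++ flatE zT ++ Mk k₁ := by simp [enc, List.append_assoc]
  rw [heq]
  exact hdb

lemma obtain_of_run (y : List RNABase) (q₀ qf : τ) (hq₀ : q₀ ∈ B.start)
    (hrun : Run B q₀ y qf) (hacc : qf ∈ B.accept) :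
    TermObtainable (wrd τ) id 1 (Ctx B) (3 * (wrd τ).length + 30) {Mk kEnd} 1 y := by
  obtain ⟨pre, suf, J, ps, rest, hsplit, heq, hkept, hp1, hblk⟩ := UP B y q₀ qf hrun hacc
  set bt0 : List Tok := .mk kp :: .mk kp :: (pre ++ [.mk (HEADk y q₀)]) with hbt0
  set psT : List (List Tok × List Tok) := (([], bt0)) :: ps with hpsT
  have hfull : (List.replicate (J+1) (wTok τ)).flatten
      = (psT.map fun p => p.1 ++ p.2).flatten ++ .grun :: .mk kEnd :: rest := by
    have key : (Tok.mk kp :: Tok.mk kp :: pre ++ Tok.mk (HEADk y q₀) :: suf)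
        ++ (List.replicate J (wTok τ)).flatten
        = bt0 ++ (((ps.map fun p => p.1 ++ p.2).flatten) ++ (.grun :: .mk kEnd :: rest)) := by
      rw [hbt0, ← heq]
      simp [List.append_assoc]
    calc (List.replicate (J+1) (wTok τ)).flatten
        = wTok τ ++ (List.replicate J (wTok τ)).flatten := by
          rw [List.replicate_succ, List.flatten_cons]
      _ = (Tok.mk kp :: Tok.mk kp :: pre ++ Tok.mk (HEADk y q₀) :: suf)
            ++ (List.replicate J (wTok τ)).flatten := by rw [← hsplit]
      _ = bt0 ++ (((ps.map fun p => p.1 ++ p.2).flatten) ++ (.grun :: .mk kEnd :: rest)) := key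
      _ = (psT.map fun p => p.1 ++ p.2).flatten ++ .grun :: .mk kEnd :: rest := by
          rw [hpsT]
          simp [List.append_assoc]
  have hTB0 : TBlockTok B (2 * (wrd τ).length + 19) bt0 := by
    refine ⟨kp, HEADk y q₀, pre, hbt0, ?_, ?_⟩
    · cases y with
      | nil =>
        have hq : q₀ = qf := hrun
        exact Ctx_startfin B hq₀ (hq ▸ hacc)
      | cons a y'' => exact Ctx_start B hq₀ a
    · have hlp : (flatE pre).length ≤ (wrd τ).length := by
        rw [wrd, hsplit]
        simp only [flatE_cons, flatE_append, List.length_append]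
        omega
      omega
  refine ⟨J + 1, Mk kEnd, flatE ((psT.map fun p => p.1 ++ p.2).flatten) ++ [.G, .G],
    rfl, ⟨flatE rest, ?_⟩, y ++ [.G, .G], [.G], ?_, rfl, ?_⟩
  · rw [flat_rep', hfull, flatE_append]
    simp [enc, List.append_assoc]
  · refine ⟨psT.map (fun p => (flatE p.1, flatE p.2)), [.G, .G], ?_, ?_, ?_, ?_, ?_⟩
    · rw [flatE_blocks]
    · rw [flatE_fsts]
      have hk : (psT.map Prod.fst).flatten = y.map Tok.dat := by
        rw [hpsT]; simpa using hkept
      rw [hk, flatE_datmap]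
    · intro p hp
      rw [List.mem_map] at hp
      obtain ⟨pt, hpt, rfl⟩ := hp
      rw [hpsT, List.mem_cons] at hpt
      rcases hpt with rfl | hpt
      · exact del_of_TBlockTok B hTB0 (by omega)
      · exact del_of_TBlockTok B (hblk pt hpt) (by omega)
    · intro p hp
      rw [List.mem_map] at hp
      obtain ⟨pt, hpt, rfl⟩ := hp
      rw [hpsT, List.mem_cons] at hpt
      apply no_lc_short
      rcases hpt with rfl | hpt
      · simp
      · obtain ⟨a, ha⟩ := hp1 pt hpt
        rw [ha]
        simp [enc]
    · exact no_del_GG B _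
  · have : thetaBar id [RNABase.G] = [RNABase.G] := by simp [thetaBar]
    rw [this]
    simp

end Assemble1


noncomputable section DownSec
open List
variable {τ : Type} [Fintype τ] (B : NFA RNABase τ)

lemma locate {K : ℕ} {ts₀ suffix : List Tok} (hW : WTok τ K = ts₀ ++ suffix)
    {p1 R : List RNABase} {k : ℕ} (hk : 2 ≤ k)
    (hfe : flatE suffix = p1 ++ (Mk k ++ R)) :
    ∃ δ tsB, suffix = δ ++ .mk k :: tsB ∧ flatE δ = p1 ∧ flatE tsB = R := by
  have hFW : flatE (WTok τ K) = (flatE ts₀ ++ p1) ++ Mk k ++ R := by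
    rw [hW, flatE_append, hfe]
    simp [List.append_assoc]
  obtain ⟨tsA, tsB, hWA, hs1, hs2⟩ := marker_occ (WFt_WTok τ K) hk hFW
  have hpre0 : ts₀ <+: WTok τ K := ⟨suffix, hW.symm⟩
  have hpreA : tsA <+: WTok τ K := ⟨.mk k :: tsB, hWA.symm⟩
  have hlen : (flatE ts₀).length ≤ (flatE tsA).length := by
    rw [← hs1]
    simp
  obtain ⟨δ, rfl⟩ := prefix_align hpre0 hpreA hlen
  have hsuf : suffix = δ ++ .mk k :: tsB := by
    have h2 := hW.symm.trans hWA
    rw [List.append_assoc] at h2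
    exact List.append_cancel_left h2
  have hδ : flatE δ = p1 := by
    rw [flatE_append] at hs1
    exact (List.append_cancel_left hs1).symm
  exact ⟨δ, tsB, hsuf, hδ, hs2.symm⟩

lemma nodead {K : ℕ} {s t : List RNABase}
    (h : flatE (WTok τ K) = s ++ Mk kDead ++ t) : False := by
  obtain ⟨ts₁, ts₂, hWA, _, _⟩ := marker_occ (WFt_WTok τ K) (by norm_num [kDead]) h
  exact kDead_notin (τ := τ) (K := K)
    (by rw [hWA]; exact List.mem_append_right _ (List.mem_cons_self))

lemma two_le_kEnd : 2 ≤ kEnd := by norm_num [kEnd]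

lemma FIN {K : ℕ} (n' : ℕ) : ∀ (ps : List (List RNABase × List RNABase))
    (ts₀ tsD : List Tok) (ulast restL : List RNABase),
    WTok τ K = ts₀ ++ (.grun :: .mk kEnd :: .mk kf :: .mk kf :: .mk kg :: tsD) →
    flatE (.grun :: .mk kEnd :: .mk kf :: .mk kf :: .mk kg :: tsD)
      = (ps.map fun p => p.1 ++ p.2).flatten ++ (ulast ++ (Mk kEnd ++ restL)) →
    (∀ p ∈ ps, DeletableBlock id 1 (Ctx B) n' p.2) →
    (∀ p ∈ ps, ∀ ab ∈ Ctx B, ¬ ab.1 <:+: p.1) →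
    (∀ b, DeletableBlock id 1 (Ctx B) n' b → ¬ b <:+: ulast) →
    ps = [] ∧ ulast = [.G, .G] := by
  intro ps ts₀ tsD ulast restL hW hfe hdel hnlc hnob
  cases ps with
  | nil =>
    simp only [List.map_nil, List.flatten_nil, List.nil_append] at hfe
    obtain ⟨δ, tsB, hsuf, hδ, _⟩ := locate hW two_le_kEnd hfe
    cases δ with
    | nil =>
      exfalso
      simp only [List.nil_append, List.cons.injEq] at hsuf
      exact Tok.noConfusion hsuf.1
    | cons d δ₁ =>
      simp only [List.cons_append, List.cons.injEq] at hsuf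
      obtain ⟨rfl, hsuf⟩ := hsuf
      cases δ₁ with
      | nil => exact ⟨rfl, by rw [← hδ]; simp [enc]⟩
      | cons d₂ δ₂ =>
        exfalso
        simp only [List.cons_append, List.cons.injEq] at hsuf
        obtain ⟨rfl, hsuf⟩ := hsuf
        obtain ⟨δ₃, rfl, _⟩ := skip_tokens [.mk kf, .mk kf, .mk kg]
          (by
            intro t ht
            simp only [List.mem_cons, List.not_mem_nil, or_false] at ht
            rcases ht with rfl | rfl | rfl <;> decide)
          hsuf.symm
        apply hnob _ (del_filler B n')
        refine ⟨[.G, .G] ++ Mk kEnd, flatE δ₃, ?_⟩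
        rw [← hδ]
        simp [enc, List.append_assoc]
  | cons p ps' =>
    exfalso
    obtain ⟨j, k2, MID, hj, hk2, hp2, hCpair⟩ := del_decomp B (hdel p (by simp))
    have hfe' : flatE (.grun :: .mk kEnd :: .mk kf :: .mk kf :: .mk kg :: tsD)
        = p.1 ++ (Mk j ++ (MID ++ Mk k2 ++ ((ps'.map fun p => p.1 ++ p.2).flatten
            ++ (ulast ++ (Mk kEnd ++ restL))))) := by
      rw [hfe, List.map_cons, List.flatten_cons, hp2]
      simp [List.append_assoc]
    obtain ⟨δ, tsB, hsuf, hδ, _⟩ := locate hW (by omega) hfe'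
    cases δ with
    | nil =>
      simp only [List.nil_append, List.cons.injEq] at hsuf
      exact Tok.noConfusion hsuf.1
    | cons d δ₁ =>
      simp only [List.cons_append, List.cons.injEq] at hsuf
      obtain ⟨rfl, hsuf⟩ := hsuf
      cases δ₁ with
      | nil =>
        -- j = kEnd, p.1 = [G,G]; pair (Mk kEnd, Mk k2) forces k2 = kDead
        simp only [List.nil_append, List.cons.injEq] at hsuf
        have hj2 : j = kEnd := Tok.mk.inj hsuf.1.symm
        subst hj2
        have hk2d : Mk k2 = Mk kDead := Ctx_inv_kEnd B hCpair
        -- Mk kDead occurs in FW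
        apply nodead (τ := τ) (K := K)
          (s := flatE ts₀ ++ (p.1 ++ (Mk kEnd ++ MID)))
          (t := (ps'.map fun p => p.1 ++ p.2).flatten ++ (ulast ++ (Mk kEnd ++ restL)))
        rw [hW, flatE_append, hfe', ← hk2d]
        simp [List.append_assoc]
      | cons d₂ δ₂ =>
        simp only [List.cons_append, List.cons.injEq] at hsuf
        obtain ⟨rfl, hsuf⟩ := hsuf
        -- p.1 contains Mk kEnd, a left context
        apply hnlc p (by simp) (Mk kEnd, Mk kDead) (Ctx_kEnd_dead B)
        rw [← hδ]
        exact ⟨[.G, .G], flatE δ₂, by simp [enc, List.append_assoc]⟩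

lemma DOWN {K : ℕ} (Htot : ∀ (q : τ) (a : RNABase), (B.step q a).Nonempty) (n' : ℕ) :
    ∀ (ps : List (List RNABase × List RNABase)) (q : τ) (a : RNABase)
      (ts₀ ts : List Tok) (ulast restL : List RNABase),
    WTok τ K = ts₀ ++ (.dat a :: .mk (kal q a) :: .mk (kal q a) ::
      .mk kf :: .mk kf :: .mk kg :: ts) →
    flatE (.dat a :: .mk (kal q a) :: .mk (kal q a) :: .mk kf :: .mk kf :: .mk kg :: ts)
      = (ps.map fun p => p.1 ++ p.2).flatten ++ (ulast ++ (Mk kEnd ++ restL)) →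
    (∀ p ∈ ps, DeletableBlock id 1 (Ctx B) n' p.2) →
    (∀ p ∈ ps, ∀ ab ∈ Ctx B, ¬ ab.1 <:+: p.1) →
    (∀ b, DeletableBlock id 1 (Ctx B) n' b → ¬ b <:+: ulast) →
    ∃ (y : List RNABase) (qf : τ),
      (ps.map Prod.fst).flatten ++ ulast = (a :: y) ++ [.G, .G] ∧
      Run B q (a :: y) qf ∧ qf ∈ B.accept := by
  intro ps
  induction ps with
  | nil =>
    intro q a ts₀ ts ulast restL hW hfe hdel hnlc hnob
    exfalso
    simp only [List.map_nil, List.flatten_nil, List.nil_append] at hfe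
    obtain ⟨δ, tsB, hsuf, hδ, _⟩ := locate hW two_le_kEnd hfe
    obtain ⟨δ', rfl, _⟩ := skip_tokens
      [.dat a, .mk (kal q a), .mk (kal q a), .mk kf, .mk kf, .mk kg]
      (by
        intro t ht
        have hge := kal_ge q a
        simp only [List.mem_cons, List.not_mem_nil, or_false] at ht
        rcases ht with rfl | rfl | rfl | rfl | rfl | rfl
        · exact fun hE => Tok.noConfusion hE
        · simp only [ne_eq, Tok.mk.injEq, kEnd]; omega
        · simp only [ne_eq, Tok.mk.injEq, kEnd]; omega
        · decide
        · decide
        · decide)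
      hsuf.symm
    apply hnob _ (del_filler B n')
    rw [← hδ]
    exact ⟨[a] ++ Mk (kal q a) ++ Mk (kal q a), flatE δ',
      by simp [enc, List.append_assoc]⟩
  | cons p ps' ih =>
    intro q a ts₀ ts ulast restL hW hfe hdel hnlc hnob
    obtain ⟨j, k2, MID, hj, hk2, hp2, hCpair⟩ := del_decomp B (hdel p (by simp))
    have hfe1 : flatE (.dat a :: .mk (kal q a) :: .mk (kal q a) ::
        .mk kf :: .mk kf :: .mk kg :: ts)
        = p.1 ++ (Mk j ++ (MID ++ (Mk k2 ++ ((ps'.map fun p => p.1 ++ p.2).flatten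
            ++ (ulast ++ (Mk kEnd ++ restL)))))) := by
      rw [hfe, List.map_cons, List.flatten_cons, hp2]
      simp [List.append_assoc]
    obtain ⟨δ, tsB, hsuf, hδ, _⟩ := locate hW (by omega) hfe1
    cases δ with
    | nil =>
      exfalso
      simp only [List.nil_append, List.cons.injEq] at hsuf
      exact Tok.noConfusion hsuf.1
    | cons d δ₁ =>
      simp only [List.cons_append, List.cons.injEq] at hsuf
      obtain ⟨rfl, hsuf⟩ := hsuf
      cases δ₁ with
      | cons d₂ δ₂ =>
        exfalso
        simp only [List.cons_append, List.cons.injEq] at hsuf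
        obtain ⟨rfl, hsuf⟩ := hsuf
        obtain ⟨β, hβ⟩ := Ctx_kal_lc B Htot q a
        apply hnlc p (by simp) (Mk (kal q a), β) hβ
        rw [← hδ]
        exact ⟨[a], flatE δ₂, by simp [enc, List.append_assoc]⟩
      | nil =>
        simp only [List.nil_append, List.cons.injEq] at hsuf
        have hjeq : j = kal q a := (Tok.mk.inj hsuf.1).symm
        subst hjeq
        have hp1 : p.1 = [a] := by rw [← hδ]; simp [enc]
        rcases Ctx_inv_kal B hCpair with ⟨q', a', hstep, hk2eq⟩ | ⟨q', hstep, haccq, hk2eq⟩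
        · -- transition to slot (q', a')
          have hk2' : k2 = kbe q' a' := Mk_inj hk2eq
          subst hk2'
          have hfe2 : flatE (.dat a :: .mk (kal q a) :: .mk (kal q a) ::
              .mk kf :: .mk kf :: .mk kg :: ts)
              = (p.1 ++ (Mk (kal q a) ++ MID)) ++ (Mk (kbe q' a')
                ++ ((ps'.map fun p => p.1 ++ p.2).flatten
                  ++ (ulast ++ (Mk kEnd ++ restL)))) := by
            rw [hfe1]
            simp [List.append_assoc]
          obtain ⟨δC, tsD, hsufC, hδC, htsD⟩ :=
            locate hW (by have := kbe_ge q' a'; omega) hfe2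
          have hWC : WTok τ K = (ts₀ ++ δC) ++ .mk (kbe q' a') :: tsD := by
            rw [hW, hsufC]
            simp [List.append_assoc]
          obtain ⟨tsD', rfl⟩ := SA_kbe q' a' K (ts₀ ++ δC) tsD hWC
          have hWnew : WTok τ K = ((ts₀ ++ δC) ++ [.mk (kbe q' a')]) ++
              (.dat a' :: .mk (kal q' a') :: .mk (kal q' a') ::
                .mk kf :: .mk kf :: .mk kg :: tsD') := by
            rw [hWC]
            simp [List.append_assoc]
          have hfenew : flatE (.dat a' :: .mk (kal q' a') :: .mk (kal q' a') ::
              .mk kf :: .mk kf :: .mk kg :: tsD')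
              = (ps'.map fun p => p.1 ++ p.2).flatten ++ (ulast ++ (Mk kEnd ++ restL)) := by
            rw [← htsD]
            simp [List.append_assoc]
          obtain ⟨y', qf, hkept', hrun', haccf⟩ := ih q' a'
            ((ts₀ ++ δC) ++ [.mk (kbe q' a')]) tsD' ulast restL hWnew hfenew
            (fun pp hpp => hdel pp (by simp [hpp]))
            (fun pp hpp => hnlc pp (by simp [hpp])) hnob
          refine ⟨a' :: y', qf, ?_, ⟨q', hstep, hrun'⟩, haccf⟩
          rw [List.map_cons, List.flatten_cons, hp1, List.append_assoc, hkept']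
          simp
        · -- final block to the terminal slot
          have hk2' : k2 = kT := Mk_inj hk2eq
          subst hk2'
          have hfe2 : flatE (.dat a :: .mk (kal q a) :: .mk (kal q a) ::
              .mk kf :: .mk kf :: .mk kg :: ts)
              = (p.1 ++ (Mk (kal q a) ++ MID)) ++ (Mk kT
                ++ ((ps'.map fun p => p.1 ++ p.2).flatten
                  ++ (ulast ++ (Mk kEnd ++ restL)))) := by
            rw [hfe1]
            simp [List.append_assoc]
          obtain ⟨δC, tsD, hsufC, hδC, htsD⟩ :=
            locate hW (by norm_num [kT]) hfe2
          have hWC : WTok τ K = (ts₀ ++ δC) ++ .mk kT :: tsD := by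
            rw [hW, hsufC]
            simp [List.append_assoc]
          obtain ⟨tsD', rfl⟩ := SA_kT K (ts₀ ++ δC) tsD hWC
          have hWnew : WTok τ K = ((ts₀ ++ δC) ++ [.mk kT]) ++
              (.grun :: .mk kEnd :: .mk kf :: .mk kf :: .mk kg :: tsD') := by
            rw [hWC]
            simp [List.append_assoc]
          have hfenew : flatE (.grun :: .mk kEnd :: .mk kf :: .mk kf :: .mk kg :: tsD')
              = (ps'.map fun p => p.1 ++ p.2).flatten ++ (ulast ++ (Mk kEnd ++ restL)) := by
            rw [← htsD]
            simp [List.append_assoc]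
          obtain ⟨rfl, hul⟩ := FIN B n' ps' ((ts₀ ++ δC) ++ [.mk kT]) tsD' ulast restL
            hWnew hfenew
            (fun pp hpp => hdel pp (by simp [hpp]))
            (fun pp hpp => hnlc pp (by simp [hpp])) hnob
          refine ⟨[], q', ?_, ⟨q', hstep, rfl⟩, haccq⟩
          simp [hul, hp1]

lemma TOP {K : ℕ} [Nonempty τ] (Htot : ∀ (q : τ) (a : RNABase), (B.step q a).Nonempty)
    (n' : ℕ) :
    ∀ (ps : List (List RNABase × List RNABase)) (ulast restL : List RNABase),
    flatE (WTok τ (K+1)) = (ps.map fun p => p.1 ++ p.2).flatten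
      ++ (ulast ++ (Mk kEnd ++ restL)) →
    (∀ p ∈ ps, DeletableBlock id 1 (Ctx B) n' p.2) →
    (∀ p ∈ ps, ∀ ab ∈ Ctx B, ¬ ab.1 <:+: p.1) →
    (∀ b, DeletableBlock id 1 (Ctx B) n' b → ¬ b <:+: ulast) →
    ∃ (y : List RNABase) (q₀ qf : τ), q₀ ∈ B.start ∧ Run B q₀ y qf ∧ qf ∈ B.accept ∧
      (ps.map Prod.fst).flatten ++ ulast = y ++ [.G, .G] := by
  intro ps ulast restL hfe hdel hnlc hnob
  obtain ⟨q1, ts1, hhead⟩ := wTok_head (τ := τ)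
  have hW : WTok τ (K+1) = ([] : List Tok) ++ (.mk kp :: .mk kp :: .mk (kbe q1 .A) ::
      .dat .A :: .mk (kal q1 .A) :: .mk (kal q1 .A) :: .mk kf :: .mk kf :: .mk kg ::
      (ts1 ++ WTok τ K)) := by
    rw [WTok_succ, hhead]
    simp [List.append_assoc]
  have hfeS : flatE (.mk kp :: .mk kp :: .mk (kbe q1 .A) :: .dat .A :: .mk (kal q1 .A) ::
      .mk (kal q1 .A) :: .mk kf :: .mk kf :: .mk kg :: (ts1 ++ WTok τ K))
      = (ps.map fun p => p.1 ++ p.2).flatten ++ (ulast ++ (Mk kEnd ++ restL)) := by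
    rw [← hfe, hW]
    simp
  have hne9 : ∀ t ∈ [Tok.mk kp, Tok.mk kp, Tok.mk (kbe q1 .A), Tok.dat RNABase.A,
      Tok.mk (kal q1 .A), Tok.mk (kal q1 .A), Tok.mk kf, Tok.mk kf, Tok.mk kg],
      t ≠ Tok.mk kEnd := by
    intro t ht
    have h1 := kal_ge q1 RNABase.A
    have h2 := kbe_ge q1 RNABase.A
    simp only [List.mem_cons, List.not_mem_nil, or_false] at ht
    rcases ht with rfl | rfl | rfl | rfl | rfl | rfl | rfl | rfl | rfl
    · decide
    · decide
    · simp only [ne_eq, Tok.mk.injEq, kEnd]; omega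
    · exact fun hE => Tok.noConfusion hE
    · simp only [ne_eq, Tok.mk.injEq, kEnd]; omega
    · simp only [ne_eq, Tok.mk.injEq, kEnd]; omega
    · decide
    · decide
    · decide
  cases ps with
  | nil =>
    exfalso
    simp only [List.map_nil, List.flatten_nil, List.nil_append] at hfeS
    obtain ⟨δ, tsB, hsuf, hδ, _⟩ := locate hW two_le_kEnd hfeS
    obtain ⟨δ', rfl, _⟩ := skip_tokens
      [.mk kp, .mk kp, .mk (kbe q1 .A), .dat .A, .mk (kal q1 .A), .mk (kal q1 .A),
        .mk kf, .mk kf, .mk kg] hne9 hsuf.symm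
    apply hnob _ (del_filler B n')
    rw [← hδ]
    exact ⟨Mk kp ++ Mk kp ++ Mk (kbe q1 .A) ++ [.A] ++ Mk (kal q1 .A) ++ Mk (kal q1 .A),
      flatE δ', by simp [enc, List.append_assoc]⟩
  | cons p ps' =>
    obtain ⟨j, k2, MID, hj, hk2, hp2, hCpair⟩ := del_decomp B (hdel p (by simp))
    have hfe1 : flatE (.mk kp :: .mk kp :: .mk (kbe q1 .A) :: .dat .A :: .mk (kal q1 .A) ::
        .mk (kal q1 .A) :: .mk kf :: .mk kf :: .mk kg :: (ts1 ++ WTok τ K))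
        = p.1 ++ (Mk j ++ (MID ++ (Mk k2 ++ ((ps'.map fun p => p.1 ++ p.2).flatten
            ++ (ulast ++ (Mk kEnd ++ restL)))))) := by
      rw [hfeS, List.map_cons, List.flatten_cons, hp2]
      simp [List.append_assoc]
    obtain ⟨δ, tsB, hsuf, hδ, _⟩ := locate hW (by omega) hfe1
    cases δ with
    | cons d δ₁ =>
      exfalso
      simp only [List.cons_append, List.cons.injEq] at hsuf
      obtain ⟨rfl, hsuf⟩ := hsuf
      cases δ₁ with
      | nil =>
        apply hnlc p (by simp) (Mk kp, Mk kDead) (Ctx_kp_dead B)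
        rw [← hδ]
        simp only [flatE_cons, flatE_nil, enc, List.append_nil]
        exact List.infix_rfl
      | cons d₂ δ₂ =>
        simp only [List.cons_append, List.cons.injEq] at hsuf
        obtain ⟨rfl, hsuf⟩ := hsuf
        apply hnlc p (by simp) (Mk kp, Mk kDead) (Ctx_kp_dead B)
        rw [← hδ]
        exact ⟨[], Mk kp ++ flatE δ₂, by simp [enc, List.append_assoc]⟩
    | nil =>
      simp only [List.nil_append, List.cons.injEq] at hsuf
      have hjeq : j = kp := (Tok.mk.inj hsuf.1).symm
      subst hjeq
      have hp1 : p.1 = [] := by rw [← hδ]; rfl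
      rcases Ctx_inv_kp B hCpair with ⟨q₀, a', hst, hk2eq⟩ |
        ⟨⟨qs, hqs, hqsacc⟩, hk2eq⟩ | hk2eq
      · -- first block goes to some slot (q₀, a')
        have hk2' : k2 = kbe q₀ a' := Mk_inj hk2eq
        subst hk2'
        have hfe2 : flatE (.mk kp :: .mk kp :: .mk (kbe q1 .A) :: .dat .A ::
            .mk (kal q1 .A) :: .mk (kal q1 .A) :: .mk kf :: .mk kf :: .mk kg ::
            (ts1 ++ WTok τ K))
            = (p.1 ++ (Mk kp ++ MID)) ++ (Mk (kbe q₀ a')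
              ++ ((ps'.map fun p => p.1 ++ p.2).flatten
                ++ (ulast ++ (Mk kEnd ++ restL)))) := by
          rw [hfe1]
          simp [List.append_assoc]
        obtain ⟨δC, tsD, hsufC, hδC, htsD⟩ :=
          locate hW (by have := kbe_ge q₀ a'; omega) hfe2
        have hWC : WTok τ (K+1) = (([] : List Tok) ++ δC) ++ .mk (kbe q₀ a') :: tsD := by
          rw [hW, hsufC]
          simp [List.append_assoc]
        obtain ⟨tsD', rfl⟩ := SA_kbe q₀ a' (K+1) (([] : List Tok) ++ δC) tsD hWC
        have hWnew : WTok τ (K+1) = ((([] : List Tok) ++ δC) ++ [.mk (kbe q₀ a')]) ++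
            (.dat a' :: .mk (kal q₀ a') :: .mk (kal q₀ a') ::
              .mk kf :: .mk kf :: .mk kg :: tsD') := by
          rw [hWC]
          simp [List.append_assoc]
        have hfenew : flatE (.dat a' :: .mk (kal q₀ a') :: .mk (kal q₀ a') ::
            .mk kf :: .mk kf :: .mk kg :: tsD')
            = (ps'.map fun p => p.1 ++ p.2).flatten ++ (ulast ++ (Mk kEnd ++ restL)) := by
          rw [← htsD]
          simp [List.append_assoc]
        obtain ⟨y', qf, hkept', hrun', haccf⟩ := DOWN B Htot n' ps' q₀ a'
          ((([] : List Tok) ++ δC) ++ [.mk (kbe q₀ a')]) tsD' ulast restL hWnew hfenew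
          (fun pp hpp => hdel pp (by simp [hpp]))
          (fun pp hpp => hnlc pp (by simp [hpp])) hnob
        refine ⟨a' :: y', q₀, qf, hst, hrun', haccf, ?_⟩
        rw [List.map_cons, List.flatten_cons, hp1, List.nil_append, hkept']
      · -- first block goes directly to the terminal slot
        have hk2' : k2 = kT := Mk_inj hk2eq
        subst hk2'
        have hfe2 : flatE (.mk kp :: .mk kp :: .mk (kbe q1 .A) :: .dat .A ::
            .mk (kal q1 .A) :: .mk (kal q1 .A) :: .mk kf :: .mk kf :: .mk kg ::
            (ts1 ++ WTok τ K))
            = (p.1 ++ (Mk kp ++ MID)) ++ (Mk kT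
              ++ ((ps'.map fun p => p.1 ++ p.2).flatten
                ++ (ulast ++ (Mk kEnd ++ restL)))) := by
          rw [hfe1]
          simp [List.append_assoc]
        obtain ⟨δC, tsD, hsufC, hδC, htsD⟩ := locate hW (by norm_num [kT]) hfe2
        have hWC : WTok τ (K+1) = (([] : List Tok) ++ δC) ++ .mk kT :: tsD := by
          rw [hW, hsufC]
          simp [List.append_assoc]
        obtain ⟨tsD', rfl⟩ := SA_kT (K+1) (([] : List Tok) ++ δC) tsD hWC
        have hWnew : WTok τ (K+1) = ((([] : List Tok) ++ δC) ++ [.mk kT]) ++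
            (.grun :: .mk kEnd :: .mk kf :: .mk kf :: .mk kg :: tsD') := by
          rw [hWC]
          simp [List.append_assoc]
        have hfenew : flatE (.grun :: .mk kEnd :: .mk kf :: .mk kf :: .mk kg :: tsD')
            = (ps'.map fun p => p.1 ++ p.2).flatten ++ (ulast ++ (Mk kEnd ++ restL)) := by
          rw [← htsD]
          simp [List.append_assoc]
        obtain ⟨rfl, hul⟩ := FIN B n' ps' ((([] : List Tok) ++ δC) ++ [.mk kT]) tsD'
          ulast restL hWnew hfenew
          (fun pp hpp => hdel pp (by simp [hpp]))
          (fun pp hpp => hnlc pp (by simp [hpp])) hnob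
        exact ⟨[], qs, qs, hqs, rfl, hqsacc, by simp [hp1, hul]⟩
      · -- dead pair: impossible since Mk kDead never occurs
        exfalso
        have hk2' : k2 = kDead := Mk_inj hk2eq
        subst hk2'
        apply nodead (τ := τ) (K := K+1)
          (s := p.1 ++ (Mk kp ++ MID))
          (t := (ps'.map fun p => p.1 ++ p.2).flatten ++ (ulast ++ (Mk kEnd ++ restL)))
        have hXX : flatE (WTok τ (K+1)) = flatE (.mk kp :: .mk kp :: .mk (kbe q1 .A) ::
            .dat .A :: .mk (kal q1 .A) :: .mk (kal q1 .A) :: .mk kf :: .mk kf :: .mk kg ::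
            (ts1 ++ WTok τ K)) := by rw [hW]; simp
        rw [hXX, hfe1]
        simp [List.append_assoc]

end DownSec


noncomputable section FinalAsm
open List
variable {τ : Type} [Fintype τ] (B : NFA RNABase τ)

lemma sub_main [Nonempty τ] (Htot : ∀ (q : τ) (a : RNABase), (B.step q a).Nonempty)
    (r : List RNABase)
    (h : TermObtainable (wrd τ) id 1 (Ctx B) (3 * (wrd τ).length + 30) {Mk kEnd} 1 r) :
    ∃ q₀ ∈ B.start, ∃ qf ∈ B.accept, Run B q₀ r qf := by
  obtain ⟨K, t, w', htT, hpre, u, x, hmax, hxlen, hu⟩ := h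
  have ht : t = Mk kEnd := htT
  subst ht
  obtain ⟨restL, hprefix⟩ := hpre
  obtain ⟨ps, ulast, hv, huu, hdel, hnlc, hnob⟩ := hmax
  cases K with
  | zero =>
    exfalso
    have := congrArg List.length hprefix
    simp [Mk] at this
  | succ K' =>
    have hfe : flatE (WTok τ (K'+1)) = (ps.map fun p => p.1 ++ p.2).flatten
        ++ (ulast ++ (Mk kEnd ++ restL)) := by
      rw [← flat_rep, ← hprefix, hv]
      simp [List.append_assoc]
    obtain ⟨y, q₀, qf, hq₀, hrun, hacc, hkept⟩ :=
      TOP B Htot (3 * (wrd τ).length + 30) ps ulast restL hfe hdel hnlc hnob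
    have hu2 : u = y ++ [.G, .G] := by rw [huu, hkept]
    have h3 : r ++ (x ++ thetaBar id x) = y ++ [.G, .G] := by
      rw [← hu2, hu]
      simp [List.append_assoc]
    have hry : r = y := by
      have hl2 : (x ++ thetaBar id x).length = ([RNABase.G, RNABase.G]).length := by
        simp [thetaBar, hxlen]
      exact (List.append_inj' h3 hl2).1
    subst hry
    exact ⟨q₀, hq₀, qf, hacc, hrun⟩

end FinalAsm

end HP


/-- For every NFA `A` over the RNA alphabet with finitely many states there are a
template word `w`, an involution `θ`, a logarithmic factor `c ≥ 1`, a finite context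
set `C`, a margin `n`, a finite set `T` of terminating sequences, and a terminating
stem length `m ≥ 1`, such that the set of words obtainable from `w^ω` by terminating
maximally parallel log-hairpin deletion is exactly `L(A)`. -/
theorem nfa_simulated_by_terminating_maxpar_log_hairpin_deletion
    (σ : Type) [Fintype σ] (A : NFA RNABase σ) :
    ∃ (w : List RNABase) (θ : RNABase → RNABase) (c : ℕ)
      (C : Set (List RNABase × List RNABase)) (n : ℕ)
      (T : Set (List RNABase)) (m : ℕ),
      θ ∘ θ = id ∧ 1 ≤ c ∧ C.Finite ∧ T.Finite ∧ 1 ≤ m ∧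
      {r : List RNABase | TermObtainable w θ c C n T m r} = A.accepts := by
  classical
  refine ⟨HP.wrd (Option σ), id, 1, HP.Ctx (HP.Bc A),
    3 * (HP.wrd (Option σ)).length + 30, {HP.Mk HP.kEnd}, 1,
    rfl, le_refl 1, HP.Ctx_finite _, Set.finite_singleton _, le_refl 1, ?_⟩
  apply Set.ext
  intro r
  simp only [Set.mem_setOf_eq]
  constructor
  · intro h
    obtain ⟨q₀, hq₀, qf, hacc, hrun⟩ := HP.sub_main (HP.Bc A) (HP.Bc_tot A) r h
    exact (HP.Bc_accepts A r).mp ⟨q₀, hq₀, qf, hacc, hrun⟩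
  · intro h
    obtain ⟨q₀, hq₀, qf, hacc, hrun⟩ := (HP.Bc_accepts A r).mpr h
    exact HP.obtain_of_run (HP.Bc A) r q₀ qf hq₀ hrun hacc
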